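/- For every ψ > 0, log E[t̄r exp(ψ·V_U)] ≤ log E[t̄r exp(ψ·V_W)], where exp denotes the matrix exponential and t̄r the normalized trace (1/n)·Tr. -/

import Mathlib

open MeasureTheory ProbabilityTheory Matrix

/-- The spectral norm of a real square matrix. -/
noncomputable def specNorm {n : ℕ} (A : Matrix (Fin n) (Fin n) ℝ) : ℝ :=
  ‖Matrix.toEuclideanCLM (𝕜 := ℝ) A‖

/-- The `‖·‖_∞` norm of a matrix: maximum absolute row sum. -/
noncomputable def rowSumNorm {n : ℕ} (A : Matrix (Fin n) (Fin n) ℝ) : ℝ :=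
  ⨆ i, ∑ j, |A i j|

section AuxNB
open NormedSpace

variable {N : ℕ}

lemma entry_pow_abs_le (M P : Matrix (Fin N) (Fin N) ℝ) (h : ∀ i j, |M i j| ≤ P i j) :
    ∀ k i j, |(M ^ k) i j| ≤ (P ^ k) i j := by
  intro k
  induction k with
  | zero => intro i j; simp [Matrix.one_apply]; split <;> simp
  | succ k ih =>
    intro i j
    rw [pow_succ, pow_succ, Matrix.mul_apply, Matrix.mul_apply]
    calc |∑ l, (M ^ k) i l * M l j| ≤ ∑ l, |(M ^ k) i l * M l j| := Finset.abs_sum_le_sum_abs _ _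
    _ ≤ ∑ l, (P ^ k) i l * P l j := by
        refine Finset.sum_le_sum fun l _ => ?_
        rw [abs_mul]
        exact mul_le_mul (ih i l) (h l j) (abs_nonneg _) (le_trans (abs_nonneg _) (ih i l))

lemma trace_pow_abs_le (M P : Matrix (Fin N) (Fin N) ℝ) (h : ∀ i j, |M i j| ≤ P i j) (k : ℕ) :
    |(M ^ k).trace| ≤ (P ^ k).trace := by
  rw [Matrix.trace, Matrix.trace]
  calc |∑ i, (M ^ k).diag i| ≤ ∑ i, |(M ^ k).diag i| := Finset.abs_sum_le_sum_abs _ _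
  _ ≤ ∑ i, (P ^ k).diag i := Finset.sum_le_sum fun i _ => entry_pow_abs_le M P h k i i

lemma trace_exp_eq_tsum (Q : Matrix (Fin N) (Fin N) ℝ) :
    (exp Q).trace = ∑' k : ℕ, (k.factorial : ℝ)⁻¹ * (Q ^ k).trace := by
  letI : SeminormedRing (Matrix (Fin N) (Fin N) ℝ) := Matrix.linftyOpSemiNormedRing
  letI : NormedRing (Matrix (Fin N) (Fin N) ℝ) := Matrix.linftyOpNormedRing
  letI : NormedAlgebra ℝ (Matrix (Fin N) (Fin N) ℝ) := Matrix.linftyOpNormedAlgebra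
  have hsum := expSeries_summable' (𝕂 := ℝ) Q
  let f : Matrix (Fin N) (Fin N) ℝ →L[ℝ] ℝ :=
    LinearMap.toContinuousLinearMap (Matrix.traceLinearMap (Fin N) ℝ ℝ)
  have := (hsum.hasSum.mapL f).tsum_eq
  rw [exp_eq_tsum (𝕂 := ℝ)]
  show f (∑' (k : ℕ), (k.factorial : ℝ)⁻¹ • Q ^ k) = _
  refine this.symm.trans ?_
  congr 1
  funext k
  simp [f, Matrix.trace_smul, smul_eq_mul]

lemma summable_trace_pow (Q : Matrix (Fin N) (Fin N) ℝ) :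
    Summable (fun k : ℕ => (k.factorial : ℝ)⁻¹ * (Q ^ k).trace) := by
  letI : SeminormedRing (Matrix (Fin N) (Fin N) ℝ) := Matrix.linftyOpSemiNormedRing
  letI : NormedRing (Matrix (Fin N) (Fin N) ℝ) := Matrix.linftyOpNormedRing
  letI : NormedAlgebra ℝ (Matrix (Fin N) (Fin N) ℝ) := Matrix.linftyOpNormedAlgebra
  have hsum := expSeries_summable' (𝕂 := ℝ) Q
  let f : Matrix (Fin N) (Fin N) ℝ →L[ℝ] ℝ :=
    LinearMap.toContinuousLinearMap (Matrix.traceLinearMap (Fin N) ℝ ℝ)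
  have := hsum.hasSum.mapL f
  refine this.summable.congr fun k => ?_
  simp [f, Matrix.trace_smul, smul_eq_mul]

lemma abs_trace_exp_le (M P : Matrix (Fin N) (Fin N) ℝ) (h : ∀ i j, |M i j| ≤ P i j) :
    |(exp M).trace| ≤ (exp P).trace := by
  rw [trace_exp_eq_tsum, trace_exp_eq_tsum]
  have hb : ∀ k : ℕ, |(k.factorial : ℝ)⁻¹ * (M ^ k).trace| ≤ (k.factorial : ℝ)⁻¹ * (P ^ k).trace := by
    intro k
    rw [abs_mul, abs_of_nonneg (by positivity : (0:ℝ) ≤ (k.factorial : ℝ)⁻¹)]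
    exact mul_le_mul_of_nonneg_left (trace_pow_abs_le M P h k) (by positivity)
  have hsumP := summable_trace_pow P
  have hsumAbs : Summable fun k : ℕ => |(k.factorial : ℝ)⁻¹ * (M ^ k).trace| :=
    Summable.of_nonneg_of_le (fun k => abs_nonneg _) hb hsumP
  have := tsum_of_norm_bounded hsumP.hasSum (fun k => (Real.norm_eq_abs _).trans_le (hb k))
  exact this

lemma sq_card_le_trace_exp_mul (M : Matrix (Fin N) (Fin N) ℝ) (hM : M.IsSymm) :
    (N : ℝ) ^ 2 ≤ (exp M).trace * (exp (-M)).trace := by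
  letI : SeminormedRing (Matrix (Fin N) (Fin N) ℝ) := Matrix.linftyOpSemiNormedRing
  letI : NormedRing (Matrix (Fin N) (Fin N) ℝ) := Matrix.linftyOpNormedRing
  letI : NormedAlgebra ℝ (Matrix (Fin N) (Fin N) ℝ) := Matrix.linftyOpNormedAlgebra
  set X := exp ((1/2 : ℝ) • M) with hXdef
  set Y := exp (-((1/2 : ℝ) • M)) with hYdef
  have hXY : X * Y = 1 := by
    rw [hXdef, hYdef, ← Matrix.exp_add_of_commute ((1/2 : ℝ) • M) _ (Commute.neg_right (Commute.refl _)), add_neg_cancel,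
      exp_zero]
  have hXX : X * X = exp M := by
    rw [hXdef, ← Matrix.exp_add_of_commute _ _ (Commute.refl _), ← add_smul]
    norm_num
  have hYY : Y * Y = exp (-M) := by
    rw [hYdef, ← Matrix.exp_add_of_commute _ _ (Commute.refl _), ← neg_add, ← add_smul]
    norm_num
  have hXs : X.IsSymm := Matrix.IsSymm.exp (by rw [Matrix.IsSymm, Matrix.transpose_smul, hM])
  have hYs : Y.IsSymm := Matrix.IsSymm.exp
    (by rw [Matrix.IsSymm, Matrix.transpose_neg, Matrix.transpose_smul, hM])
  have h1 : (N : ℝ) = ∑ p : Fin N × Fin N, X p.1 p.2 * Y p.2 p.1 := by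
    have h0 : ((1 : Matrix (Fin N) (Fin N) ℝ)).trace = (N : ℝ) := by simp
    rw [← h0, ← hXY, Matrix.trace, Fintype.sum_prod_type]
    simp [Matrix.diag, Matrix.mul_apply]
  have h2 : (exp M).trace = ∑ p : Fin N × Fin N, (X p.1 p.2) ^ 2 := by
    rw [← hXX, Matrix.trace, Fintype.sum_prod_type]
    refine Finset.sum_congr rfl fun i _ => ?_
    simp only [Matrix.diag, Matrix.mul_apply]
    exact Finset.sum_congr rfl fun l _ => by rw [hXs.apply, sq]
  have h3 : (exp (-M)).trace = ∑ p : Fin N × Fin N, (Y p.2 p.1) ^ 2 := by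
    rw [← hYY, Matrix.trace]
    rw [show ∑ p : Fin N × Fin N, (Y p.2 p.1) ^ 2 = ∑ p : Fin N × Fin N, (Y p.1 p.2) ^ 2 from
      Fintype.sum_equiv (Equiv.prodComm _ _) _ _ (fun p => rfl)]
    rw [Fintype.sum_prod_type]
    refine Finset.sum_congr rfl fun i _ => ?_
    simp only [Matrix.diag, Matrix.mul_apply]
    exact Finset.sum_congr rfl fun l _ => by rw [hYs.apply, sq]
  rw [h1, h2, h3]
  exact Finset.sum_mul_sq_le_sq_mul_sq _ _ _

section Helpers
variable {Ω : Type} {m0 : MeasurableSpace Ω} {μ : MeasureTheory.Measure Ω}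
  [MeasureTheory.IsProbabilityMeasure μ]

lemma integrable_of_bound (f : Ω → ℝ) (hf : Measurable f) (C : ℝ) (h : ∀ ω, |f ω| ≤ C) :
    MeasureTheory.Integrable f μ :=
  ⟨hf.aestronglyMeasurable, MeasureTheory.HasFiniteIntegral.of_bounded
    (ae_of_all _ fun ω => (Real.norm_eq_abs _).trans_le (h ω))⟩

lemma condexp_abs_le_of_le (mX : MeasurableSpace Ω) (f g : Ω → ℝ)
    (hf : MeasureTheory.Integrable f μ) (hg : MeasureTheory.Integrable g μ)
    (h : ∀ ω, |f ω| ≤ g ω) :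
    ∀ᵐ ω ∂μ, |(μ[f|mX]) ω| ≤ (μ[g|mX]) ω := by
  have h1 : μ[f|mX] ≤ᵐ[μ] μ[g|mX] :=
    condExp_mono hf hg (ae_of_all _ fun ω => (le_abs_self _).trans (h ω))
  have h2 : μ[-g|mX] ≤ᵐ[μ] μ[f|mX] :=
    condExp_mono hg.neg hf (ae_of_all _ fun ω => by
      have := (neg_abs_le (f ω)).trans' (neg_le_neg (h ω)); simpa using this)
  filter_upwards [h1, h2, condExp_neg (μ := μ) (m := mX) g] with ω e1 e2 e3
  rw [abs_le]
  refine ⟨?_, e1⟩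
  have : -(μ[g|mX]) ω ≤ (μ[f|mX]) ω := by
    have := e2; rw [e3] at this; simpa using this
  linarith

lemma condexp_le_const (mX : MeasurableSpace Ω) (hle : mX ≤ m0) (f : Ω → ℝ)
    (hf : MeasureTheory.Integrable f μ) (C : ℝ) (h : ∀ ω, f ω ≤ C) :
    ∀ᵐ ω ∂μ, (μ[f|mX]) ω ≤ C := by
  have h1 : μ[f|mX] ≤ᵐ[μ] μ[fun _ => C|mX] :=
    condExp_mono hf (MeasureTheory.integrable_const C) (ae_of_all _ h)
  rw [MeasureTheory.condExp_const hle C] at h1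
  exact h1

lemma measurable_trace_exp {N : ℕ} (F : Ω → Matrix (Fin N) (Fin N) ℝ)
    (hF : ∀ i j, Measurable fun ω => F ω i j) :
    Measurable fun ω => (exp (F ω)).trace := by
  have hpow : ∀ (k : ℕ) i j, Measurable fun ω => ((F ω) ^ k) i j := by
    intro k
    induction k with
    | zero =>
      intro i j
      simp only [pow_zero, Matrix.one_apply]
      exact measurable_const
    | succ k ih =>
      intro i j
      simp only [pow_succ, Matrix.mul_apply]
      exact Finset.measurable_sum _ fun l _ => (ih i l).mul (hF l j)
  have hS : ∀ mm : ℕ,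
      Measurable fun ω => ∑ k ∈ Finset.range mm, (k.factorial : ℝ)⁻¹ * ((F ω) ^ k).trace := by
    intro mm
    refine Finset.measurable_sum _ fun k _ => Measurable.const_mul ?_ _
    simp only [Matrix.trace, Matrix.diag]
    exact Finset.measurable_sum _ fun i _ => hpow k i i
  refine measurable_of_tendsto_metrizable hS (tendsto_pi_nhds.2 fun ω => ?_)
  rw [trace_exp_eq_tsum]
  exact (summable_trace_pow (F ω)).hasSum.tendsto_sum_nat

end Helpers

lemma trace_exp_nonneg {N : ℕ} (M : Matrix (Fin N) (Fin N) ℝ) (hM : M.IsSymm) :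
    0 ≤ (exp M).trace := by
  letI : SeminormedRing (Matrix (Fin N) (Fin N) ℝ) := Matrix.linftyOpSemiNormedRing
  letI : NormedRing (Matrix (Fin N) (Fin N) ℝ) := Matrix.linftyOpNormedRing
  letI : NormedAlgebra ℝ (Matrix (Fin N) (Fin N) ℝ) := Matrix.linftyOpNormedAlgebra
  set X := exp ((1/2 : ℝ) • M) with hXdef
  have hXX : X * X = exp M := by
    rw [hXdef, ← Matrix.exp_add_of_commute _ _ (Commute.refl _), ← add_smul]
    norm_num
  have hXs : X.IsSymm := Matrix.IsSymm.exp (by rw [Matrix.IsSymm, Matrix.transpose_smul, hM])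
  rw [← hXX, Matrix.trace]
  refine Finset.sum_nonneg fun i _ => ?_
  simp only [Matrix.diag, Matrix.mul_apply]
  refine Finset.sum_nonneg fun l _ => ?_
  rw [hXs.apply]
  exact mul_self_nonneg _

end AuxNB

/-- Lemma 2. For every `ψ > 0`,
`log E[t̄r exp(ψ·V_U)] ≤ log E[t̄r exp(ψ·V_W)]`. -/
theorem log_trace_mgf_VU_le_VW
    {n : ℕ} {T : Type} [Fintype T] [DecidableEq T] [Nonempty T]
    (m : T → ℕ) (hm2 : ∀ t, 2 ≤ m t) (hmn : ∀ t, m t ≤ n)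
    -- the deterministic subgraph adjacency matrices A(t,L)
    (A : (Σ t : T, Fin (m t) ↪ Fin n) → Matrix (Fin n) (Fin n) ℝ)
    (hAsymm : ∀ k, (A k).IsSymm)
    (hAdiag : ∀ k i, A k i i = 0)
    (hA01 : ∀ k i j, A k i j = 0 ∨ A k i j = 1)
    (hAne : ∀ k, ∃ i j, A k i j ≠ 0)
    (hAsupp : ∀ k i j, A k i j ≠ 0 → (∃ a, k.2 a = i) ∧ (∃ b, k.2 b = j))
    -- the generating probabilities p(t,L)
    (p : (Σ t : T, Fin (m t) ↪ Fin n) → ℝ)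
    (hp : ∀ k, p k ∈ Set.Icc (0 : ℝ) 1)
    -- the probability space, the Bernoulli family x(t,L) and the independent copies x'(t,L)
    {Ω : Type} [MeasurableSpace Ω] (μ : Measure Ω) [IsProbabilityMeasure μ]
    (x x' : (Σ t : T, Fin (m t) ↪ Fin n) → Ω → ℝ)
    (hxmeas : ∀ k, Measurable (x k)) (hx'meas : ∀ k, Measurable (x' k))
    (hx01 : ∀ k ω, x k ω = 0 ∨ x k ω = 1) (hx'01 : ∀ k ω, x' k ω = 0 ∨ x' k ω = 1)
    (hxp : ∀ k, μ {ω | x k ω = 1} = ENNReal.ofReal (p k))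
    (hx'p : ∀ k, μ {ω | x' k ω = 1} = ENNReal.ofReal (p k))
    (hindep : iIndepFun (Sum.elim x x') μ)
    -- W(x), the resampled W(x^{(t,L)}), expectations and centered versions
    (W : Ω → Matrix (Fin n) (Fin n) ℝ)
    (hW : ∀ ω, W ω = ∑ k, x k ω • A k)
    (Wk : (Σ t : T, Fin (m t) ↪ Fin n) → Ω → Matrix (Fin n) (Fin n) ℝ)
    (hWk : ∀ k ω, Wk k ω = ∑ k', (if k' = k then x' k ω else x k' ω) • A k')
    (EW : Matrix (Fin n) (Fin n) ℝ)
    (hEW : ∀ i j, EW i j = ∫ ω, W ω i j ∂μ)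
    (hatW : Ω → Matrix (Fin n) (Fin n) ℝ)
    (hhatW : ∀ ω, hatW ω = W ω - EW)
    (hatWk : (Σ t : T, Fin (m t) ↪ Fin n) → Ω → Matrix (Fin n) (Fin n) ℝ)
    (hhatWk : ∀ k ω, hatWk k ω = Wk k ω - EW)
    -- the σ-algebra generated by the family x
    (mX : MeasurableSpace Ω)
    (hmX : mX = MeasurableSpace.comap (fun ω k => x k ω) MeasurableSpace.pi)
    -- the Efron–Stein variance proxy for the weighted model
    (VW : Ω → Matrix (Fin n) (Fin n) ℝ)
    (hVW : ∀ ω i j, VW ω i j =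
      (1 / 2) * ∑ k, (μ[fun ω' => ((hatW ω' - hatWk k ω') ^ 2) i j | mX]) ω)
    -- U(x), the resampled U(x^{(t,L)}), expectations and centered versions
    (U : Ω → Matrix (Fin n) (Fin n) ℝ)
    (hU : ∀ ω i j, U ω i j = min (W ω i j) 1)
    (Uk : (Σ t : T, Fin (m t) ↪ Fin n) → Ω → Matrix (Fin n) (Fin n) ℝ)
    (hUk : ∀ k ω i j, Uk k ω i j = min (Wk k ω i j) 1)
    (EU : Matrix (Fin n) (Fin n) ℝ)
    (hEU : ∀ i j, EU i j = ∫ ω, U ω i j ∂μ)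
    (hatU : Ω → Matrix (Fin n) (Fin n) ℝ)
    (hhatU : ∀ ω, hatU ω = U ω - EU)
    (hatUk : (Σ t : T, Fin (m t) ↪ Fin n) → Ω → Matrix (Fin n) (Fin n) ℝ)
    (hhatUk : ∀ k ω, hatUk k ω = Uk k ω - EU)
    -- the Efron–Stein variance proxy for the unweighted model
    (VU : Ω → Matrix (Fin n) (Fin n) ℝ)
    (hVU : ∀ ω i j, VU ω i j =
      (1 / 2) * ∑ k, (μ[fun ω' => ((hatU ω' - hatUk k ω') ^ 2) i j | mX]) ω)
    : ∀ ψ : ℝ, 0 < ψ →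
      Real.log (∫ ω, (1 / (n : ℝ)) * (NormedSpace.exp (ψ • VU ω)).trace ∂μ) ≤
      Real.log (∫ ω, (1 / (n : ℝ)) * (NormedSpace.exp (ψ • VW ω)).trace ∂μ) := by
  intro ψ hψ
  classical
  rename_i mΩ _hPM
  obtain ⟨t0⟩ := ‹Nonempty T›
  have hn0 : 0 < n := lt_of_lt_of_le (by norm_num) ((hm2 t0).trans (hmn t0))
  have hnR : (0 : ℝ) < n := by exact_mod_cast hn0
  -- basic entry facts
  have hA0 : ∀ k (i j : Fin n), 0 ≤ A k i j := fun k i j => by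
    rcases hA01 k i j with h | h <;> rw [h] <;> norm_num
  have hA1 : ∀ k (i j : Fin n), A k i j ≤ 1 := fun k i j => by
    rcases hA01 k i j with h | h <;> rw [h] <;> norm_num
  have hAsym : ∀ k (i j : Fin n), A k i j = A k j i := fun k i j => (hAsymm k).apply j i
  have hx0 : ∀ k ω, 0 ≤ x k ω := fun k ω => by rcases hx01 k ω with h | h <;> rw [h] <;> norm_num
  have hc1 : ∀ k ω, |x k ω - x' k ω| ≤ 1 := fun k ω => by
    rcases hx01 k ω with h | h <;> rcases hx'01 k ω with h' | h' <;> rw [h, h'] <;> norm_num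
  -- entry formulas
  have hWe : ∀ ω (i j : Fin n), W ω i j = ∑ k, x k ω * A k i j := by
    intro ω i j; rw [hW]; simp [Matrix.sum_apply]
  have hWke : ∀ k ω (i j : Fin n),
      Wk k ω i j = ∑ k', (if k' = k then x' k ω else x k' ω) * A k' i j := by
    intro k ω i j
    rw [hWk]
    simp only [Matrix.sum_apply]
    refine Finset.sum_congr rfl fun k' _ => ?_
    split_ifs <;> simp [Matrix.smul_apply]
  -- the difference matrices
  have hWWk : ∀ k ω, W ω - Wk k ω = (x k ω - x' k ω) • A k := by
    intro k ω
    rw [hW, hWk, ← Finset.sum_sub_distrib]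
    rw [show (∑ k', (x k' ω • A k' - (if k' = k then x' k ω else x k' ω) • A k'))
        = ∑ k', (x k' ω - if k' = k then x' k ω else x k' ω) • A k' from
      Finset.sum_congr rfl fun k' _ => (sub_smul _ _ _).symm]
    rw [Finset.sum_eq_single k]
    · simp
    · intro k' _ hk'; simp [hk']
    · intro h; exact absurd (Finset.mem_univ k) h
  have hDW : ∀ k ω, hatW ω - hatWk k ω = (x k ω - x' k ω) • A k := by
    intro k ω; rw [hhatW, hhatWk, sub_sub_sub_cancel_right, hWWk]
  have hDU : ∀ k ω, hatU ω - hatUk k ω = U ω - Uk k ω := by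
    intro k ω; rw [hhatU, hhatUk, sub_sub_sub_cancel_right]
  have hfWval : ∀ k (i j : Fin n) ω, ((hatW ω - hatWk k ω) ^ 2) i j
      = ∑ l, ((x k ω - x' k ω) * A k i l) * ((x k ω - x' k ω) * A k l j) := by
    intro k i j ω
    rw [hDW, sq, Matrix.mul_apply]
    simp [Matrix.smul_apply, smul_eq_mul]
  have hfUval : ∀ k (i j : Fin n) ω, ((hatU ω - hatUk k ω) ^ 2) i j
      = ∑ l, (U ω - Uk k ω) i l * (U ω - Uk k ω) l j := by
    intro k i j ω
    rw [hDU, sq, Matrix.mul_apply]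
  -- 1-Lipschitz property of min · 1
  have hlip : ∀ a b : ℝ, |min a 1 - min b 1| ≤ |a - b| := by
    intro a b
    rcases le_total a 1 with h1 | h1 <;> rcases le_total b 1 with h2 | h2
    · rw [min_eq_left h1, min_eq_left h2]
    · rw [min_eq_left h1, min_eq_right h2, abs_of_nonpos (by linarith), abs_sub_comm]
      calc -(a - 1) = 1 - a := by ring
      _ ≤ b - a := by linarith
      _ ≤ |b - a| := le_abs_self _
    · rw [min_eq_right h1, min_eq_left h2, abs_of_nonneg (by linarith)]
      calc 1 - b ≤ a - b := by linarith
      _ ≤ |a - b| := le_abs_self _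
    · rw [min_eq_right h1, min_eq_right h2]; simp [abs_nonneg]
  have hDUb : ∀ k ω (a b : Fin n),
      |(U ω - Uk k ω) a b| ≤ |x k ω - x' k ω| * A k a b := by
    intro k ω a b
    have h3 : W ω a b - Wk k ω a b = (x k ω - x' k ω) * A k a b := by
      have := congrFun (congrFun (hWWk k ω) a) b
      simpa [Matrix.sub_apply] using this
    have h4 : (U ω - Uk k ω) a b = min (W ω a b) 1 - min (Wk k ω a b) 1 := by
      rw [Matrix.sub_apply, hU, hUk]
    rw [h4]
    calc |min (W ω a b) 1 - min (Wk k ω a b) 1| ≤ |W ω a b - Wk k ω a b| := hlip _ _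
    _ = |x k ω - x' k ω| * A k a b := by rw [h3, abs_mul, abs_of_nonneg (hA0 k a b)]
  -- the key pointwise domination
  have hkey : ∀ k (i j : Fin n) ω,
      |((hatU ω - hatUk k ω) ^ 2) i j| ≤ ((hatW ω - hatWk k ω) ^ 2) i j := by
    intro k i j ω
    rw [hfUval k i j ω, hfWval k i j ω]
    calc |∑ l, (U ω - Uk k ω) i l * (U ω - Uk k ω) l j|
        ≤ ∑ l, |(U ω - Uk k ω) i l * (U ω - Uk k ω) l j| := Finset.abs_sum_le_sum_abs _ _
    _ ≤ ∑ l, ((x k ω - x' k ω) * A k i l) * ((x k ω - x' k ω) * A k l j) := by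
        refine Finset.sum_le_sum fun l _ => ?_
        rw [abs_mul]
        have heq : (|x k ω - x' k ω| * A k i l) * (|x k ω - x' k ω| * A k l j)
            = ((x k ω - x' k ω) * A k i l) * ((x k ω - x' k ω) * A k l j) := by
          rw [mul_mul_mul_comm, abs_mul_abs_self, mul_mul_mul_comm]
        rw [← heq]
        exact mul_le_mul (hDUb k ω i l) (hDUb k ω l j) (abs_nonneg _)
          (mul_nonneg (abs_nonneg _) (hA0 k i l))
  have hfWnn : ∀ k (i j : Fin n) ω, 0 ≤ ((hatW ω - hatWk k ω) ^ 2) i j :=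
    fun k i j ω => (abs_nonneg _).trans (hkey k i j ω)
  have hfWb : ∀ k (i j : Fin n) ω, ((hatW ω - hatWk k ω) ^ 2) i j ≤ (n : ℝ) := by
    intro k i j ω
    rw [hfWval]
    calc ∑ l, ((x k ω - x' k ω) * A k i l) * ((x k ω - x' k ω) * A k l j)
        ≤ ∑ _l : Fin n, (1 : ℝ) := by
          refine Finset.sum_le_sum fun l _ => ?_
          rw [mul_mul_mul_comm, ← abs_mul_abs_self]
          have e1 : |x k ω - x' k ω| * |x k ω - x' k ω| ≤ 1 :=
            mul_le_one₀ (hc1 k ω) (abs_nonneg _) (hc1 k ω)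
          have e2 : A k i l * A k l j ≤ 1 :=
            mul_le_one₀ (hA1 k i l) (hA0 k l j) (hA1 k l j)
          exact mul_le_one₀ e1 (mul_nonneg (hA0 k i l) (hA0 k l j)) e2
    _ = (n : ℝ) := by simp
  -- measurability
  have hWm : ∀ i j : Fin n, Measurable[mΩ] fun ω => W ω i j := by
    intro i j
    simp only [hWe]
    exact Finset.measurable_sum _ fun k _ => (hxmeas k).mul_const _
  have hWkm : ∀ k (i j : Fin n), Measurable[mΩ] fun ω => Wk k ω i j := by
    intro k i j
    simp only [hWke]
    refine Finset.measurable_sum _ fun k' _ => ?_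
    by_cases h : k' = k
    · simp only [h, if_pos rfl]; exact (hx'meas k).mul_const _
    · simp only [if_neg h]; exact (hxmeas k').mul_const _
  have hUm : ∀ i j : Fin n, Measurable[mΩ] fun ω => U ω i j := by
    intro i j; simp only [hU]; exact (hWm i j).min measurable_const
  have hUkm : ∀ k (i j : Fin n), Measurable[mΩ] fun ω => Uk k ω i j := by
    intro k i j; simp only [hUk]; exact (hWkm k i j).min measurable_const
  have hfUm : ∀ k (i j : Fin n), Measurable[mΩ] fun ω => ((hatU ω - hatUk k ω) ^ 2) i j := by
    intro k i j
    simp only [hfUval, Matrix.sub_apply]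
    exact Finset.measurable_sum _ fun l _ =>
      ((hUm i l).sub (hUkm k i l)).mul ((hUm l j).sub (hUkm k l j))
  have hfWm : ∀ k (i j : Fin n), Measurable[mΩ] fun ω => ((hatW ω - hatWk k ω) ^ 2) i j := by
    intro k i j
    simp only [hfWval]
    exact Finset.measurable_sum _ fun l _ =>
      (((hxmeas k).sub (hx'meas k)).mul_const _).mul (((hxmeas k).sub (hx'meas k)).mul_const _)
  have hfUint : ∀ k (i j : Fin n),
      Integrable (fun ω => ((hatU ω - hatUk k ω) ^ 2) i j) μ :=
    fun k i j => integrable_of_bound _ (hfUm k i j) n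
      (fun ω => (hkey k i j ω).trans (hfWb k i j ω))
  have hfWint : ∀ k (i j : Fin n),
      Integrable (fun ω => ((hatW ω - hatWk k ω) ^ 2) i j) μ :=
    fun k i j => integrable_of_bound _ (hfWm k i j) n
      (fun ω => by rw [abs_of_nonneg (hfWnn k i j ω)]; exact hfWb k i j ω)
  have hmeasX : Measurable[mΩ] (fun ω (k : Σ t : T, Fin (m t) ↪ Fin n) => x k ω) := by
    exact @measurable_pi_lambda Ω (Σ t : T, Fin (m t) ↪ Fin n) (fun _ => ℝ) mΩ
      (fun _ => Real.measurableSpace) _ (fun k => hxmeas k)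
  have hle : mX ≤ mΩ := by
    rw [hmX]
    exact Measurable.comap_le hmeasX
  -- conditional-expectation level a.e. facts
  have haeCE : ∀ᵐ ω ∂μ, ∀ k (i j : Fin n),
      |(μ[fun ω' => ((hatU ω' - hatUk k ω') ^ 2) i j | mX]) ω|
        ≤ (μ[fun ω' => ((hatW ω' - hatWk k ω') ^ 2) i j | mX]) ω
      ∧ (μ[fun ω' => ((hatW ω' - hatWk k ω') ^ 2) i j | mX]) ω ≤ (n : ℝ) := by
    rw [ae_all_iff]; intro k; rw [ae_all_iff]; intro i; rw [ae_all_iff]; intro j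
    filter_upwards [condexp_abs_le_of_le mX _ _ (hfUint k i j) (hfWint k i j) (hkey k i j),
      condexp_le_const mX hle _ (hfWint k i j) n (hfWb k i j)] with ω e1 e2
    exact ⟨e1, e2⟩
  set B : ℝ := (1 / 2) * (Fintype.card (Σ t : T, Fin (m t) ↪ Fin n)) * n with hB
  have hBnn : 0 ≤ B := by positivity
  have haeV : ∀ᵐ ω ∂μ, ∀ i j : Fin n, |VU ω i j| ≤ VW ω i j ∧ VW ω i j ≤ B := by
    filter_upwards [haeCE] with ω hω i j
    constructor
    · rw [hVU ω i j, hVW ω i j, abs_mul, abs_of_nonneg (by norm_num : (0:ℝ) ≤ 1/2)]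
      refine mul_le_mul_of_nonneg_left ?_ (by norm_num)
      calc |∑ k, (μ[fun ω' => ((hatU ω' - hatUk k ω') ^ 2) i j | mX]) ω|
          ≤ ∑ k, |(μ[fun ω' => ((hatU ω' - hatUk k ω') ^ 2) i j | mX]) ω| :=
            Finset.abs_sum_le_sum_abs _ _
      _ ≤ ∑ k, (μ[fun ω' => ((hatW ω' - hatWk k ω') ^ 2) i j | mX]) ω :=
            Finset.sum_le_sum fun k _ => (hω k i j).1
    · rw [hVW ω i j, hB]
      calc (1/2) * ∑ k, (μ[fun ω' => ((hatW ω' - hatWk k ω') ^ 2) i j | mX]) ω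
          ≤ (1/2) * ∑ _k : (Σ t : T, Fin (m t) ↪ Fin n), (n : ℝ) :=
            mul_le_mul_of_nonneg_left (Finset.sum_le_sum fun k _ => (hω k i j).2) (by norm_num)
      _ = (1/2) * (Fintype.card (Σ t : T, Fin (m t) ↪ Fin n)) * n := by
            rw [Finset.sum_const, Finset.card_univ, nsmul_eq_mul, mul_assoc]
  -- symmetry of VU
  have hUsym : ∀ ω (a b : Fin n), U ω a b = U ω b a := by
    intro ω a b
    rw [hU, hU]
    congr 1
    rw [hWe, hWe]
    exact Finset.sum_congr rfl fun k _ => by rw [hAsym k a b]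
  have hUksym : ∀ k ω (a b : Fin n), Uk k ω a b = Uk k ω b a := by
    intro k ω a b
    rw [hUk, hUk]
    congr 1
    rw [hWke, hWke]
    exact Finset.sum_congr rfl fun k' _ => by rw [hAsym k' a b]
  have hVUsym : ∀ ω, (ψ • VU ω).IsSymm := by
    intro ω
    rw [Matrix.IsSymm]
    ext i j
    rw [Matrix.transpose_apply, Matrix.smul_apply, Matrix.smul_apply, smul_eq_mul, smul_eq_mul]
    have hVV : VU ω j i = VU ω i j := by
      rw [hVU ω j i, hVU ω i j]
      congr 1
      refine Finset.sum_congr rfl fun k _ => ?_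
      have hfun : (fun ω' => ((hatU ω' - hatUk k ω') ^ 2) j i)
          = fun ω' => ((hatU ω' - hatUk k ω') ^ 2) i j := by
        funext ω'
        rw [hfUval k j i ω', hfUval k i j ω']
        refine Finset.sum_congr rfl fun l _ => ?_
        have hs : ∀ a b : Fin n, (U ω' - Uk k ω') a b = (U ω' - Uk k ω') b a := by
          intro a b
          rw [Matrix.sub_apply, Matrix.sub_apply, hUsym ω' a b, hUksym k ω' a b]
        rw [hs j l, hs l i]
        ring
      rw [hfun]
    rw [hVV]
  -- measurability of VU/VW entries
  have hVUm : ∀ i j : Fin n, Measurable[mΩ] fun ω => VU ω i j := by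
    intro i j
    have : (fun ω => VU ω i j) = fun ω =>
        (1/2) * ∑ k, (μ[fun ω' => ((hatU ω' - hatUk k ω') ^ 2) i j | mX]) ω :=
      funext fun ω => hVU ω i j
    rw [this]
    refine Measurable.const_mul ?_ _
    exact Finset.measurable_sum _ fun k _ => (stronglyMeasurable_condExp.mono hle).measurable
  have hVWm : ∀ i j : Fin n, Measurable[mΩ] fun ω => VW ω i j := by
    intro i j
    have : (fun ω => VW ω i j) = fun ω =>
        (1/2) * ∑ k, (μ[fun ω' => ((hatW ω' - hatWk k ω') ^ 2) i j | mX]) ω :=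
      funext fun ω => hVW ω i j
    rw [this]
    refine Measurable.const_mul ?_ _
    exact Finset.measurable_sum _ fun k _ => (stronglyMeasurable_condExp.mono hle).measurable
  -- the dominating constant matrix
  set Jc : Matrix (Fin n) (Fin n) ℝ := Matrix.of fun _ _ => ψ * B with hJ
  have hJentry : ∀ i j : Fin n, Jc i j = ψ * B := fun i j => rfl
  set Ctop : ℝ := (NormedSpace.exp Jc).trace with hC
  have hCn : (n : ℝ) ≤ Ctop := by
    have h0 := abs_trace_exp_le (0 : Matrix (Fin n) (Fin n) ℝ) Jc
      (fun i j => by rw [Matrix.zero_apply, abs_zero, hJentry]; exact mul_nonneg hψ.le hBnn)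
    calc (n : ℝ) = |(NormedSpace.exp (0 : Matrix (Fin n) (Fin n) ℝ)).trace| := by
          rw [NormedSpace.exp_zero, Matrix.trace_one]
          simp [abs_of_nonneg hnR.le]
    _ ≤ Ctop := h0
  have hCpos : 0 < Ctop := lt_of_lt_of_le hnR hCn
  -- the main a.e. trace facts
  have haeT : ∀ᵐ ω ∂μ,
      (NormedSpace.exp (ψ • VU ω)).trace ≤ (NormedSpace.exp (ψ • VW ω)).trace
      ∧ |(NormedSpace.exp (ψ • VU ω)).trace| ≤ Ctop
      ∧ |(NormedSpace.exp (ψ • VW ω)).trace| ≤ Ctop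
      ∧ (n : ℝ) ^ 2 / Ctop ≤ (NormedSpace.exp (ψ • VU ω)).trace := by
    filter_upwards [haeV] with ω hω
    have hUW : ∀ i j : Fin n, |(ψ • VU ω) i j| ≤ (ψ • VW ω) i j := by
      intro i j
      rw [Matrix.smul_apply, Matrix.smul_apply, smul_eq_mul, smul_eq_mul, abs_mul,
        abs_of_pos hψ]
      exact mul_le_mul_of_nonneg_left (hω i j).1 hψ.le
    have hWJ : ∀ i j : Fin n, |(ψ • VW ω) i j| ≤ Jc i j := by
      intro i j
      rw [Matrix.smul_apply, smul_eq_mul, abs_mul, abs_of_pos hψ, hJentry]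
      have h0 : 0 ≤ VW ω i j := (abs_nonneg _).trans (hω i j).1
      exact mul_le_mul_of_nonneg_left (by rw [abs_of_nonneg h0]; exact (hω i j).2) hψ.le
    have hUJ : ∀ i j : Fin n, |(ψ • VU ω) i j| ≤ Jc i j :=
      fun i j => (hUW i j).trans ((le_abs_self _).trans (hWJ i j))
    have t1 : (NormedSpace.exp (ψ • VU ω)).trace ≤ (NormedSpace.exp (ψ • VW ω)).trace :=
      (le_abs_self _).trans (abs_trace_exp_le _ _ hUW)
    have t2 := abs_trace_exp_le _ _ hUJ
    have t3 := abs_trace_exp_le _ _ hWJ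
    have hsymU : (ψ • VU ω).IsSymm := hVUsym ω
    have hnegsym : (-(ψ • VU ω)).IsSymm := by
      rw [Matrix.IsSymm, Matrix.transpose_neg, hsymU]
    have hCS := sq_card_le_trace_exp_mul (ψ • VU ω) hsymU
    have hnegb : (NormedSpace.exp (-(ψ • VU ω))).trace ≤ Ctop := by
      refine (le_abs_self _).trans (abs_trace_exp_le _ _ fun i j => ?_)
      rw [Matrix.neg_apply, abs_neg]
      exact hUJ i j
    have hnn : 0 ≤ (NormedSpace.exp (ψ • VU ω)).trace := trace_exp_nonneg _ hsymU
    have hlow : (n : ℝ) ^ 2 ≤ (NormedSpace.exp (ψ • VU ω)).trace * Ctop :=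
      hCS.trans (mul_le_mul_of_nonneg_left hnegb hnn)
    exact ⟨t1, t2, t3, by rw [div_le_iff₀ hCpos]; exact hlow⟩
  -- measurability / integrability of the integrands
  have hgUmeas : Measurable[mΩ] fun ω => (1 / (n : ℝ)) * (NormedSpace.exp (ψ • VU ω)).trace := by
    refine Measurable.const_mul ?_ _
    refine measurable_trace_exp (fun ω => ψ • VU ω) fun i j => ?_
    simp only [Matrix.smul_apply, smul_eq_mul]
    exact (hVUm i j).const_mul ψ
  have hgWmeas : Measurable[mΩ] fun ω => (1 / (n : ℝ)) * (NormedSpace.exp (ψ • VW ω)).trace := by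
    refine Measurable.const_mul ?_ _
    refine measurable_trace_exp (fun ω => ψ • VW ω) fun i j => ?_
    simp only [Matrix.smul_apply, smul_eq_mul]
    exact (hVWm i j).const_mul ψ
  have hnn' : (0 : ℝ) ≤ 1 / (n : ℝ) := by positivity
  have hintU : Integrable (fun ω => (1 / (n : ℝ)) * (NormedSpace.exp (ψ • VU ω)).trace) μ := by
    refine ⟨hgUmeas.aestronglyMeasurable,
      HasFiniteIntegral.of_bounded (C := (1 / (n : ℝ)) * Ctop) ?_⟩
    filter_upwards [haeT] with ω hω
    rw [Real.norm_eq_abs, abs_mul, abs_of_nonneg hnn']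
    exact mul_le_mul_of_nonneg_left hω.2.1 hnn'
  have hintW : Integrable (fun ω => (1 / (n : ℝ)) * (NormedSpace.exp (ψ • VW ω)).trace) μ := by
    refine ⟨hgWmeas.aestronglyMeasurable,
      HasFiniteIntegral.of_bounded (C := (1 / (n : ℝ)) * Ctop) ?_⟩
    filter_upwards [haeT] with ω hω
    rw [Real.norm_eq_abs, abs_mul, abs_of_nonneg hnn']
    exact mul_le_mul_of_nonneg_left hω.2.2.1 hnn'
  have hmono : ∫ ω, (1 / (n : ℝ)) * (NormedSpace.exp (ψ • VU ω)).trace ∂μ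
      ≤ ∫ ω, (1 / (n : ℝ)) * (NormedSpace.exp (ψ • VW ω)).trace ∂μ := by
    refine integral_mono_ae hintU hintW ?_
    filter_upwards [haeT] with ω hω
    exact mul_le_mul_of_nonneg_left hω.1 hnn'
  have hposL : 0 < ∫ ω, (1 / (n : ℝ)) * (NormedSpace.exp (ψ • VU ω)).trace ∂μ := by
    have hconst : (0 : ℝ) < (1 / (n : ℝ)) * ((n : ℝ) ^ 2 / Ctop) := by positivity
    have hmono2 : ∫ _ω, (1 / (n : ℝ)) * ((n : ℝ) ^ 2 / Ctop) ∂μ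
        ≤ ∫ ω, (1 / (n : ℝ)) * (NormedSpace.exp (ψ • VU ω)).trace ∂μ := by
      refine integral_mono_ae (integrable_const _) hintU ?_
      filter_upwards [haeT] with ω hω
      exact mul_le_mul_of_nonneg_left hω.2.2.2 hnn'
    rw [integral_const, probReal_univ, one_smul] at hmono2
    exact lt_of_lt_of_le hconst hmono2
  exact Real.log_le_log hposL hmono
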